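/- Let R ⊆ List (ℕ × Bool) be a recursively enumerable set of words and let A ⊆ ℕ be recursively enumerable; write G := PresentedGroup (FreeGroup.mk '' R). Then there exists a recursively enumerable set of words R' ⊆ List (ℕ × Bool) with R ⊆ R' such that the normal closure of FreeGroup.mk '' R' in FreeGroup ℕ equals the kernel of the composite homomorphism FreeGroup ℕ → G → G/tor^A_ω(G); consequently the universal A-torsion-free quotient G/tor^A_ω(G) is isomorphic to PresentedGroup (FreeGroup.mk '' R'), i.e. it is recursively presented on the same generators. -/

import Mathlib

/-- The `X`-torsion of a group `G`: elements `g` with `g ^ n = 1` for some `n ∈ X`. -/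
def xTorsion (X : Set ℕ) (G : Type*) [Group G] : Set G := {g | ∃ n ∈ X, g ^ n = 1}

/-- A group is `X`-torsion-free if its `X`-torsion consists only of the identity. -/
def IsXTorsionFree (X : Set ℕ) (G : Type*) [Group G] : Prop := xTorsion X G = {1}

/-- The set of orders (≥ 2) of torsion elements of `G`. -/
def torord (G : Type*) [Group G] : Set ℕ := {n | 2 ≤ n ∧ ∃ g : G, orderOf g = n}

/-- One step of the `X`-torsion annihilation: the normal closure of the set of elements
whose image in `G ⧸ N` is `X`-torsion (i.e. `g ^ n ∈ N` for some `n ∈ X`). -/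
def torStep (X : Set ℕ) {G : Type*} [Group G] (N : Subgroup G) : Subgroup G :=
  Subgroup.normalClosure {g : G | ∃ n ∈ X, g ^ n ∈ N}

/-- `torX X G n` is `tor^X_n(G)`. -/
def torX (X : Set ℕ) (G : Type*) [Group G] : ℕ → Subgroup G
  | 0 => ⊥
  | n + 1 => torStep X (torX X G n)

lemma torStep_mono (X : Set ℕ) {G : Type*} [Group G] {N M : Subgroup G} (h : N ≤ M) :
    torStep X N ≤ torStep X M :=
  Subgroup.normalClosure_mono (fun g hg => by
    obtain ⟨n, hn, hgn⟩ := hg; exact ⟨n, hn, h hgn⟩)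

lemma torX_le_succ (X : Set ℕ) (G : Type*) [Group G] (n : ℕ) :
    torX X G n ≤ torX X G (n + 1) := by
  induction n with
  | zero => exact bot_le
  | succ n ih => exact torStep_mono X ih

lemma torX_mono (X : Set ℕ) (G : Type*) [Group G] : Monotone (torX X G) :=
  monotone_nat_of_le_succ (torX_le_succ X G)

/-- `tor^X_ω(G) = ⋃_n tor^X_n(G)`, as a subgroup of `G`. -/
def torOmega (X : Set ℕ) (G : Type*) [Group G] : Subgroup G where
  carrier := ⋃ n, (torX X G n : Set G)
  one_mem' := Set.mem_iUnion.mpr ⟨0, Subgroup.one_mem _⟩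
  mul_mem' := by
    intro a b ha hb
    obtain ⟨m, hm⟩ := Set.mem_iUnion.mp ha
    obtain ⟨n, hn⟩ := Set.mem_iUnion.mp hb
    exact Set.mem_iUnion.mpr ⟨max m n, Subgroup.mul_mem _
      (torX_mono X G (le_max_left m n) hm) (torX_mono X G (le_max_right m n) hn)⟩
  inv_mem' := by
    intro a ha
    obtain ⟨m, hm⟩ := Set.mem_iUnion.mp ha
    exact Set.mem_iUnion.mpr ⟨m, Subgroup.inv_mem _ hm⟩

instance torX_normal (X : Set ℕ) (G : Type*) [Group G] (n : ℕ) : (torX X G n).Normal := by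
  cases n with
  | zero => exact inferInstanceAs (⊥ : Subgroup G).Normal
  | succ n => exact inferInstanceAs (Subgroup.normalClosure _).Normal

instance torOmega_normal (X : Set ℕ) (G : Type*) [Group G] : (torOmega X G).Normal := by
  constructor
  intro a ha g
  obtain ⟨m, hm⟩ := Set.mem_iUnion.mp ha
  exact Set.mem_iUnion.mpr ⟨m, (torX_normal X G m).conj_mem a hm g⟩

/-- A predicate on a primcodable type is recursively enumerable if it is the domain of a
partial computable function. -/
def REPredOld {α : Type*} [Primcodable α] (p : α → Prop) : Prop :=
  Partrec (fun a => Part.assert (p a) (fun _ => Part.some ()))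

/-- A group is finitely presented if it is isomorphic to the group of a finite presentation. -/
def IsFinitelyPresented (G : Type*) [Group G] : Prop :=
  ∃ (n : ℕ) (rels : Set (FreeGroup (Fin n))), rels.Finite ∧ Nonempty (G ≃* PresentedGroup rels)

theorem mem_torOmega_iff {X : Set ℕ} {G : Type*} [Group G] (x : G) :
    x ∈ torOmega X G ↔ ∃ n, x ∈ torX X G n := by
  rw [← Subgroup.mem_carrier]
  exact Set.mem_iUnion

set_option linter.unusedSectionVars false

namespace RETools
open Encodable Nat.Partrec.Code

variable {α β : Type*} [Primcodable α] [Primcodable β]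

/-- Σ₁ predicates: witnessed by a primrec monotone bool matrix. -/
def Sig1 (p : α → Prop) : Prop :=
  ∃ f : α → ℕ → Bool, Primrec₂ f ∧ (∀ a m n, m ≤ n → f a m = true → f a n = true) ∧
    ∀ a, (p a ↔ ∃ n, f a n = true)

theorem Sig1.rePred {p : α → Prop} (h : Sig1 p) : REPredOld p := by
  obtain ⟨f, hf, -, hiff⟩ := h
  have H : Partrec fun a => (Nat.rfind fun n => Part.some (f a n)).map fun _ => () :=
    (Partrec.rfind hf.to_comp.partrec₂).map (Computable.const ()).to₂
  refine H.of_eq fun a => Part.ext fun u => ?_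
  cases u
  rw [Part.mem_map_iff, Part.mem_assert_iff]
  constructor
  · rintro ⟨n, hn, -⟩
    exact ⟨(hiff a).2 ⟨n, by simpa using Nat.rfind_spec hn⟩, Part.mem_some _⟩
  · rintro ⟨hp, -⟩
    obtain ⟨n, hn⟩ := (hiff a).1 hp
    obtain ⟨m, hm, -⟩ := Nat.rfind_min' (p := fun n => f a n) hn
    exact ⟨m, hm, rfl⟩

theorem REPred.sig1 {p : α → Prop} (h : REPredOld p) : Sig1 p := by
  classical
  have h' : Nat.Partrec fun n =>
      (Part.ofOption (decode (α := α) n)).bind fun a =>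
        (Part.assert (p a) fun _ => Part.some ()).map encode := h
  obtain ⟨c, hc⟩ := Nat.Partrec.Code.exists_code.1 h'
  refine ⟨fun a n => (Nat.Partrec.Code.evaln n c (encode a)).isSome, ?_, ?_, ?_⟩
  · exact (Primrec.option_isSome.comp
      (Nat.Partrec.Code.primrec_evaln.comp
        ((Primrec.snd.pair (Primrec.const c)).pair
          (Primrec.encode.comp Primrec.fst)))).to₂
  · intro a m n hmn hm
    obtain ⟨x, hx⟩ := Option.isSome_iff_exists.1 hm
    exact Option.isSome_iff_exists.2 ⟨x, Nat.Partrec.Code.evaln_mono hmn hx⟩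
  · intro a
    have hdom : p a ↔ (Nat.Partrec.Code.eval c (encode a)).Dom := by
      rw [hc]; simp [encodek, Part.assert, Part.bind, Part.map]
    rw [hdom]
    constructor
    · intro hd
      obtain ⟨k, hk⟩ := Nat.Partrec.Code.evaln_complete.1 (Part.get_mem hd)
      exact ⟨k, Option.isSome_iff_exists.2 ⟨_, hk⟩⟩
    · rintro ⟨n, hn⟩
      obtain ⟨x, hx⟩ := Option.isSome_iff_exists.1 hn
      exact Part.dom_iff_mem.2 ⟨x, Nat.Partrec.Code.evaln_complete.2 ⟨n, hx⟩⟩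

theorem Sig1.imp_iff {p q : α → Prop} (hp : Sig1 p) (h : ∀ a, q a ↔ p a) : Sig1 q := by
  obtain ⟨f, hf, fm, hfi⟩ := hp
  exact ⟨f, hf, fm, fun a => (h a).trans (hfi a)⟩

theorem Sig1.of_primrec {p : α → Prop} [DecidablePred p] (h : PrimrecPred p) : Sig1 p :=
  ⟨fun a _ => decide (p a), (h.comp Primrec.fst).decide.to₂, fun _ _ _ _ hb => hb,
    fun a => by simp [decide_eq_true_iff]⟩

theorem Sig1.of_bool {p : α → Prop} {f : α → Bool} (hf : Primrec f)
    (h : ∀ a, p a ↔ f a = true) : Sig1 p :=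
  ⟨fun a _ => f a, (hf.comp Primrec.fst).to₂, fun _ _ _ _ hb => hb,
    fun a => by simp [h a]⟩

theorem Sig1.comp {q : β → Prop} (hq : Sig1 q) {g : α → β} (hg : Primrec g) :
    Sig1 fun a => q (g a) := by
  obtain ⟨f, hf, hmono, hiff⟩ := hq
  exact ⟨fun a n => f (g a) n, hf.comp (hg.comp Primrec.fst) Primrec.snd |>.to₂,
    fun a => hmono (g a), fun a => hiff (g a)⟩

theorem Sig1.and {p q : α → Prop} (hp : Sig1 p) (hq : Sig1 q) : Sig1 fun a => p a ∧ q a := by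
  obtain ⟨f, hf, fm, hfi⟩ := hp
  obtain ⟨g, hg, gm, hgi⟩ := hq
  refine ⟨fun a n => f a n && g a n, ((Primrec.dom_bool₂ (· && ·)).comp hf hg).to₂, ?_, ?_⟩
  · intro a m n hmn h
    rw [Bool.and_eq_true] at h ⊢
    exact ⟨fm a m n hmn h.1, gm a m n hmn h.2⟩
  · intro a
    constructor
    · rintro ⟨hpa, hqa⟩
      obtain ⟨m, hm⟩ := (hfi a).1 hpa
      obtain ⟨n, hn⟩ := (hgi a).1 hqa
      refine ⟨max m n, ?_⟩
      rw [Bool.and_eq_true]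
      exact ⟨fm a m _ (le_max_left _ _) hm, gm a n _ (le_max_right _ _) hn⟩
    · rintro ⟨n, hn⟩
      rw [Bool.and_eq_true] at hn
      exact ⟨(hfi a).2 ⟨n, hn.1⟩, (hgi a).2 ⟨n, hn.2⟩⟩

theorem Sig1.or {p q : α → Prop} (hp : Sig1 p) (hq : Sig1 q) : Sig1 fun a => p a ∨ q a := by
  obtain ⟨f, hf, fm, hfi⟩ := hp
  obtain ⟨g, hg, gm, hgi⟩ := hq
  refine ⟨fun a n => f a n || g a n, ((Primrec.dom_bool₂ (· || ·)).comp hf hg).to₂, ?_, ?_⟩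
  · intro a m n hmn h
    rw [Bool.or_eq_true] at h ⊢
    exact h.imp (fm a m n hmn) (gm a m n hmn)
  · intro a
    simp only [Bool.or_eq_true, exists_or]
    rw [hfi a, hgi a]

/-- Build a Σ₁ predicate from an arbitrary (non-monotone) primrec bool matrix. -/
theorem Sig1.of_exists_bool {h : α → ℕ → Bool} (hh : Primrec₂ h) :
    Sig1 fun a => ∃ k, h a k = true := by
  classical
  have key : ∀ a n, (Nat.rec false (fun k r => r || h a k) n : Bool) = true ↔
      ∃ k < n, h a k = true := by
    intro a n
    induction n with
    | zero => simp
    | succ n ih =>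
      simp only [Bool.or_eq_true, ih]
      constructor
      · rintro (⟨k, hk, hk'⟩ | hk)
        · exact ⟨k, Nat.lt_succ_of_lt hk, hk'⟩
        · exact ⟨n, Nat.lt_succ_self n, hk⟩
      · rintro ⟨k, hk, hk'⟩
        rcases Nat.lt_succ_iff_lt_or_eq.1 hk with hk | rfl
        · exact Or.inl ⟨k, hk, hk'⟩
        · exact Or.inr hk'
  refine ⟨fun a n => Nat.rec false (fun k r => r || h a k) n, ?_, ?_, ?_⟩
  · exact Primrec.nat_rec (Primrec.const false)
      (((Primrec.dom_bool₂ (· || ·)).comp (Primrec.snd.comp Primrec.snd)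
        (hh.comp Primrec.fst (Primrec.fst.comp Primrec.snd))).to₂)
  · intro a m n hmn hm
    rw [key] at hm ⊢
    obtain ⟨k, hk, hk'⟩ := hm
    exact ⟨k, lt_of_lt_of_le hk hmn, hk'⟩
  · intro a
    constructor
    · rintro ⟨k, hk⟩
      exact ⟨k + 1, (key a (k + 1)).2 ⟨k, Nat.lt_succ_self k, hk⟩⟩
    · rintro ⟨n, hn⟩
      obtain ⟨k, -, hk⟩ := (key a n).1 hn
      exact ⟨k, hk⟩

theorem Sig1.exists' {q : α × β → Prop} (hq : Sig1 q) : Sig1 fun a => ∃ b, q (a, b) := by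
  classical
  obtain ⟨f, hf, fm, hfi⟩ := hq
  have hh : Primrec₂ fun (a : α) (m : ℕ) =>
      ((decode (α := β) m.unpair.1).map fun b => f (a, b) m.unpair.2).getD false := by
    have h1 : Primrec fun (x : α × ℕ) =>
        (decode (α := β) x.2.unpair.1).map fun b => f (x.1, b) x.2.unpair.2 :=
      Primrec.option_map
        (Primrec.decode.comp (Primrec.fst.comp (Primrec.unpair.comp Primrec.snd)))
        ((hf.comp ((Primrec.fst.comp Primrec.fst).pair Primrec.snd)
          (Primrec.snd.comp (Primrec.unpair.comp (Primrec.snd.comp Primrec.fst)))).to₂)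
    exact (Primrec.option_getD.comp h1 (Primrec.const false)).to₂
  refine (Sig1.of_exists_bool hh).imp_iff ?_
  intro a
  constructor
  · rintro ⟨b, hb⟩
    obtain ⟨n, hn⟩ := (hfi (a, b)).1 hb
    refine ⟨Nat.pair (encode b) n, ?_⟩
    simp [Nat.unpair_pair, encodek, hn]
  · rintro ⟨m, hm⟩
    rcases he : (decode (α := β) m.unpair.1) with - | b
    · simp [he] at hm
    · simp only [he, Option.map_some, Option.getD_some] at hm
      exact ⟨b, (hfi (a, b)).2 ⟨m.unpair.2, hm⟩⟩

theorem Sig1.listAll {q : β → Prop} (hq : Sig1 q) :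
    Sig1 fun l : List β => ∀ x ∈ l, q x := by
  obtain ⟨f, hf, fm, hfi⟩ := hq
  have key : ∀ (l : List β) (n : ℕ),
      (l.foldr (fun x r => f x n && r) true = true) ↔ ∀ x ∈ l, f x n = true := by
    intro l n
    induction l with
    | nil => simp
    | cons a l ih => simp [Bool.and_eq_true, ih]
  refine ⟨fun l n => l.foldr (fun x r => f x n && r) true, ?_, ?_, ?_⟩
  · exact (Primrec.list_foldr Primrec.fst (Primrec.const true)
      (((Primrec.dom_bool₂ (· && ·)).comp
        (hf.comp (Primrec.fst.comp Primrec.snd) (Primrec.snd.comp Primrec.fst))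
        (Primrec.snd.comp Primrec.snd)).to₂)).to₂
  · intro l m n hmn hm
    rw [key] at hm ⊢
    exact fun x hx => fm x m n hmn (hm x hx)
  · intro l
    constructor
    · intro h
      induction l with
      | nil => exact ⟨0, by simp [key]⟩
      | cons a t ih =>
        obtain ⟨N, hN⟩ := ih fun x hx => h x (List.mem_cons_of_mem _ hx)
        obtain ⟨n, hn⟩ := (hfi a).1 (h a (List.mem_cons_self))
        refine ⟨max n N, (key _ _).2 ?_⟩
        intro x hx
        rcases List.mem_cons.1 hx with rfl | hx
        · exact fm x n _ (le_max_left _ _) hn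
        · exact fm x N _ (le_max_right _ _) ((key _ _).1 hN x hx)
    · rintro ⟨n, hn⟩ x hx
      exact (hfi x).2 ⟨n, (key l n).1 hn x hx⟩

end RETools

namespace RETools

abbrev Word := List (ℕ × Bool)

/-- `wpow k v` is the word `v` concatenated `k` times. -/
def wpow : ℕ → Word → Word
  | 0, _ => []
  | k + 1, v => v ++ wpow k v

theorem mk_wpow (k : ℕ) (v : Word) : FreeGroup.mk (wpow k v) = FreeGroup.mk v ^ k := by
  induction k with
  | zero => rw [pow_zero]; rfl
  | succ k ih => rw [wpow, ← FreeGroup.mul_mk, ih, pow_succ']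

def insPair (l₁ l₂ : Word) (x : ℕ) (b : Bool) : Word := l₁ ++ (x, b) :: (x, !b) :: l₂

/-- Derivability of a word, witnessing membership of its image in the kernel. -/
inductive Der (R : Set Word) (A : Set ℕ) : Word → Prop
  | rel {w} : w ∈ R → Der R A w
  | one : Der R A []
  | mul {w v} : Der R A w → Der R A v → Der R A (w ++ v)
  | inv {w} : Der R A w → Der R A (FreeGroup.invRev w)
  | conj (u : Word) {w} : Der R A w → Der R A (u ++ w ++ FreeGroup.invRev u)
  | pow {k w} : k ∈ A → Der R A (wpow k w) → Der R A w
  | red {w v} : Der R A w → FreeGroup.Red.Step w v ∨ FreeGroup.Red.Step v w → Der R A v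

def Just (R : Set Word) (A : Set ℕ) (x : Word × List Word) : Prop :=
  x.1 ∈ R ∨ x.1 = [] ∨
    (∃ p : Word × Word, (p.1 ∈ x.2 ∧ p.2 ∈ x.2) ∧ x.1 = p.1 ++ p.2) ∨
    (∃ w : Word, w ∈ x.2 ∧ x.1 = FreeGroup.invRev w) ∨
    (∃ p : Word × Word, p.2 ∈ x.2 ∧ x.1 = p.1 ++ p.2 ++ FreeGroup.invRev p.1) ∨
    (∃ k : ℕ, k ∈ A ∧ wpow k x.1 ∈ x.2) ∨
    (∃ t : (Word × Word) × ℕ × Bool,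
      (insPair t.1.1 t.1.2 t.2.1 t.2.2 ∈ x.2 ∧ x.1 = t.1.1 ++ t.1.2) ∨
      (t.1.1 ++ t.1.2 ∈ x.2 ∧ x.1 = insPair t.1.1 t.1.2 t.2.1 t.2.2))

def JustT (R : Set Word) (A : Set ℕ) (t : List Word) : Prop :=
  t = [] ∨ ∃ p : Word × List Word, t = p.1 :: p.2 ∧ Just R A p

def Chain (R : Set Word) (A : Set ℕ) (l : List Word) : Prop :=
  ∀ t ∈ l.tails, JustT R A t

section Primrecs

variable {σ τ : Type*} [Primcodable σ] [Primcodable τ]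

/-- Boolean list membership. -/
def memb [DecidableEq σ] (a : σ) (l : List σ) : Bool :=
  l.foldr (fun y r => (decide (y = a)) || r) false

theorem memb_iff [DecidableEq σ] (a : σ) (l : List σ) : memb a l = true ↔ a ∈ l := by
  induction l with
  | nil => simp [memb]
  | cons b l ih => simp [memb, List.mem_cons, ih.symm, @eq_comm _ b a, memb]

theorem primrec_memb [DecidableEq σ] {f : τ → σ} {g : τ → List σ}
    (hf : Primrec f) (hg : Primrec g) : Primrec fun t => memb (f t) (g t) := by
  unfold memb
  exact Primrec.list_foldr hg (Primrec.const false)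
    (((Primrec.dom_bool₂ (· || ·)).comp
      (Primrec.eq.comp (Primrec.fst.comp Primrec.snd) (hf.comp Primrec.fst)).decide
      (Primrec.snd.comp Primrec.snd)).to₂)

theorem primrec_beq [DecidableEq σ] {f g : τ → σ} (hf : Primrec f) (hg : Primrec g) :
    Primrec fun t => decide (f t = g t) :=
  (Primrec.eq.comp hf hg).decide

theorem primrec_band {f g : τ → Bool} (hf : Primrec f) (hg : Primrec g) :
    Primrec fun t => f t && g t :=
  (Primrec.dom_bool₂ (· && ·)).comp hf hg

theorem primrec_bor {f g : τ → Bool} (hf : Primrec f) (hg : Primrec g) :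
    Primrec fun t => f t || g t :=
  (Primrec.dom_bool₂ (· || ·)).comp hf hg

theorem primrec_invRev : Primrec (FreeGroup.invRev : Word → Word) := by
  have h : Primrec fun w : Word => (w.map fun y => (y.1, !y.2)).reverse :=
    Primrec.list_reverse.comp (Primrec.list_map Primrec.id
      (((Primrec.fst.comp Primrec.snd).pair
        ((Primrec.dom_bool not).comp (Primrec.snd.comp Primrec.snd))).to₂))
  exact h.of_eq fun w => by simp [FreeGroup.invRev]

theorem primrec_wpow : Primrec fun x : Word × ℕ => wpow x.2 x.1 := by
  have h := Primrec.nat_rec (α := Word) (β := Word) (Primrec.const ([] : Word))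
    ((Primrec.list_append.comp Primrec.fst (Primrec.snd.comp Primrec.snd)).to₂)
  have h2 : Primrec fun x : Word × ℕ =>
      x.2.rec (motive := fun _ => Word) [] fun _ IH => x.1 ++ IH := h
  refine h2.of_eq fun x => ?_
  induction x.2 with
  | zero => rfl
  | succ k ih => simp only [wpow, ih]

theorem primrec_insPair : Primrec fun t : (Word × Word) × ℕ × Bool =>
    insPair t.1.1 t.1.2 t.2.1 t.2.2 := by
  unfold insPair
  exact Primrec.list_append.comp (Primrec.fst.comp Primrec.fst)
    (Primrec.list_cons.comp ((Primrec.fst.comp Primrec.snd).pair (Primrec.snd.comp Primrec.snd))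
      (Primrec.list_cons.comp ((Primrec.fst.comp Primrec.snd).pair
        ((Primrec.dom_bool not).comp (Primrec.snd.comp Primrec.snd)))
        (Primrec.snd.comp Primrec.fst)))

theorem primrec_tails : Primrec (List.tails : List σ → List (List σ)) := by
  have h : Primrec fun l : List σ =>
      l.rec (motive := fun _ => List (List σ)) [[]] fun b t IH => (b :: t) :: IH :=
    Primrec.list_rec Primrec.id (Primrec.const [[]])
      ((Primrec.list_cons.comp
        (Primrec.list_cons.comp (Primrec.fst.comp Primrec.snd)
          (Primrec.fst.comp (Primrec.snd.comp Primrec.snd)))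
        (Primrec.snd.comp (Primrec.snd.comp Primrec.snd))).to₂)
  refine h.of_eq fun l => ?_
  induction l with
  | nil => rfl
  | cons a l ih => simp only [List.tails, ih]

end Primrecs

section Sig1Der

variable {R : Set Word} {A : Set ℕ}

theorem sig1_just (hR : REPredOld (· ∈ R)) (hA : REPredOld (· ∈ A)) : Sig1 (Just R A) := by
  classical
  have hRs := REPred.sig1 hR
  have hAs := REPred.sig1 hA
  have c1 : Sig1 fun x : Word × List Word => x.1 ∈ R := hRs.comp Primrec.fst
  have c2 : Sig1 fun x : Word × List Word => x.1 = [] :=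
    Sig1.of_bool (primrec_beq Primrec.fst (Primrec.const [])) (fun x => by simp)
  have c3 : Sig1 fun x : Word × List Word =>
      ∃ p : Word × Word, (p.1 ∈ x.2 ∧ p.2 ∈ x.2) ∧ x.1 = p.1 ++ p.2 := by
    refine Sig1.exists'
      (q := fun y : (Word × List Word) × Word × Word =>
        (y.2.1 ∈ y.1.2 ∧ y.2.2 ∈ y.1.2) ∧ y.1.1 = y.2.1 ++ y.2.2)
      (Sig1.of_bool (f := fun y : (Word × List Word) × Word × Word =>
      (memb y.2.1 y.1.2 && memb y.2.2 y.1.2) && decide (y.1.1 = y.2.1 ++ y.2.2)) ?_ ?_)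
    · exact primrec_band
        (primrec_band
          (primrec_memb (Primrec.fst.comp Primrec.snd) (Primrec.snd.comp Primrec.fst))
          (primrec_memb (Primrec.snd.comp Primrec.snd) (Primrec.snd.comp Primrec.fst)))
        (primrec_beq (Primrec.fst.comp Primrec.fst)
          (Primrec.list_append.comp (Primrec.fst.comp Primrec.snd)
            (Primrec.snd.comp Primrec.snd)))
    · intro y
      simp [memb_iff]
  have c4 : Sig1 fun x : Word × List Word =>
      ∃ w : Word, w ∈ x.2 ∧ x.1 = FreeGroup.invRev w := by
    refine Sig1.exists'
      (q := fun y : (Word × List Word) × Word =>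
        y.2 ∈ y.1.2 ∧ y.1.1 = FreeGroup.invRev y.2)
      (Sig1.of_bool (f := fun y : (Word × List Word) × Word =>
      memb y.2 y.1.2 && decide (y.1.1 = FreeGroup.invRev y.2)) ?_ ?_)
    · exact primrec_band
        (primrec_memb Primrec.snd (Primrec.snd.comp Primrec.fst))
        (primrec_beq (Primrec.fst.comp Primrec.fst) (primrec_invRev.comp Primrec.snd))
    · intro y
      simp [memb_iff]
  have c5 : Sig1 fun x : Word × List Word =>
      ∃ p : Word × Word, p.2 ∈ x.2 ∧ x.1 = p.1 ++ p.2 ++ FreeGroup.invRev p.1 := by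
    refine Sig1.exists'
      (q := fun y : (Word × List Word) × Word × Word =>
        y.2.2 ∈ y.1.2 ∧ y.1.1 = y.2.1 ++ y.2.2 ++ FreeGroup.invRev y.2.1)
      (Sig1.of_bool (f := fun y : (Word × List Word) × Word × Word =>
      memb y.2.2 y.1.2 && decide (y.1.1 = y.2.1 ++ y.2.2 ++ FreeGroup.invRev y.2.1)) ?_ ?_)
    · exact primrec_band
        (primrec_memb (Primrec.snd.comp Primrec.snd) (Primrec.snd.comp Primrec.fst))
        (primrec_beq (Primrec.fst.comp Primrec.fst)
          (Primrec.list_append.comp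
            (Primrec.list_append.comp (Primrec.fst.comp Primrec.snd)
              (Primrec.snd.comp Primrec.snd))
            (primrec_invRev.comp (Primrec.fst.comp Primrec.snd))))
    · intro y
      simp [memb_iff]
  have c6 : Sig1 fun x : Word × List Word => ∃ k : ℕ, k ∈ A ∧ wpow k x.1 ∈ x.2 := by
    refine Sig1.exists'
      (q := fun y : (Word × List Word) × ℕ =>
        y.2 ∈ A ∧ wpow y.2 y.1.1 ∈ y.1.2)
      (Sig1.and (hAs.comp Primrec.snd)
      (Sig1.of_bool (f := fun y : (Word × List Word) × ℕ =>
        memb (wpow y.2 y.1.1) y.1.2) ?_ ?_))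
    · exact primrec_memb
        (primrec_wpow.comp ((Primrec.fst.comp Primrec.fst).pair Primrec.snd))
        (Primrec.snd.comp Primrec.fst)
    · intro y
      simp [memb_iff]
  have c7 : Sig1 fun x : Word × List Word =>
      ∃ t : (Word × Word) × ℕ × Bool,
        (insPair t.1.1 t.1.2 t.2.1 t.2.2 ∈ x.2 ∧ x.1 = t.1.1 ++ t.1.2) ∨
        (t.1.1 ++ t.1.2 ∈ x.2 ∧ x.1 = insPair t.1.1 t.1.2 t.2.1 t.2.2) := by
    refine Sig1.exists'
      (q := fun y : (Word × List Word) × (Word × Word) × ℕ × Bool =>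
        (insPair y.2.1.1 y.2.1.2 y.2.2.1 y.2.2.2 ∈ y.1.2 ∧ y.1.1 = y.2.1.1 ++ y.2.1.2) ∨
        (y.2.1.1 ++ y.2.1.2 ∈ y.1.2 ∧ y.1.1 = insPair y.2.1.1 y.2.1.2 y.2.2.1 y.2.2.2))
      (Sig1.of_bool
      (f := fun y : (Word × List Word) × (Word × Word) × ℕ × Bool =>
        (memb (insPair y.2.1.1 y.2.1.2 y.2.2.1 y.2.2.2) y.1.2 &&
          decide (y.1.1 = y.2.1.1 ++ y.2.1.2)) ||
        (memb (y.2.1.1 ++ y.2.1.2) y.1.2 &&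
          decide (y.1.1 = insPair y.2.1.1 y.2.1.2 y.2.2.1 y.2.2.2))) ?_ ?_)
    · exact primrec_bor
        (primrec_band
          (primrec_memb (primrec_insPair.comp Primrec.snd) (Primrec.snd.comp Primrec.fst))
          (primrec_beq (Primrec.fst.comp Primrec.fst)
            (Primrec.list_append.comp (Primrec.fst.comp (Primrec.fst.comp Primrec.snd))
              (Primrec.snd.comp (Primrec.fst.comp Primrec.snd)))))
        (primrec_band
          (primrec_memb (Primrec.list_append.comp
            (Primrec.fst.comp (Primrec.fst.comp Primrec.snd))
            (Primrec.snd.comp (Primrec.fst.comp Primrec.snd)))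
            (Primrec.snd.comp Primrec.fst))
          (primrec_beq (Primrec.fst.comp Primrec.fst) (primrec_insPair.comp Primrec.snd)))
    · intro y
      simp [memb_iff]
  exact Sig1.imp_iff
    (c1.or (c2.or (c3.or (c4.or (c5.or (c6.or c7)))))) (fun x => Iff.rfl)

theorem sig1_justT (hR : REPredOld (· ∈ R)) (hA : REPredOld (· ∈ A)) : Sig1 (JustT R A) := by
  classical
  refine Sig1.imp_iff ?_ (fun t => Iff.rfl)
  unfold JustT
  refine Sig1.or (Sig1.of_bool (primrec_beq Primrec.id (Primrec.const [])) (fun t => by simp)) ?_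
  refine Sig1.exists'
    (q := fun y : List Word × Word × List Word => y.1 = y.2.1 :: y.2.2 ∧ Just R A y.2) ?_
  exact Sig1.and
    (Sig1.of_bool (primrec_beq Primrec.fst
      (Primrec.list_cons.comp (Primrec.fst.comp Primrec.snd) (Primrec.snd.comp Primrec.snd)))
      (fun y => by simp))
    ((sig1_just hR hA).comp Primrec.snd)

theorem sig1_chain (hR : REPredOld (· ∈ R)) (hA : REPredOld (· ∈ A)) : Sig1 (Chain R A) := by
  refine Sig1.imp_iff ?_ (fun l => Iff.rfl)
  unfold Chain
  exact ((sig1_justT hR hA).listAll).comp primrec_tails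

theorem rePred_der (hR : REPredOld (· ∈ R)) (hA : REPredOld (· ∈ A))
    (hder : ∀ v : Word, Der R A v ↔ ∃ l, Chain R A (v :: l)) :
    REPredOld (Der R A) := by
  refine Sig1.rePred (Sig1.imp_iff ?_ hder)
  exact Sig1.exists'
    (q := fun y : Word × List Word => Chain R A (y.1 :: y.2))
    ((sig1_chain hR hA).comp (Primrec.list_cons.comp Primrec.fst Primrec.snd))

end Sig1Der

end RETools

namespace RETools

variable {R : Set Word} {A : Set ℕ}

theorem chain_nil : Chain R A [] := by
  intro t ht
  simp only [List.tails, List.mem_singleton] at ht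
  exact Or.inl ht

theorem chain_cons {v : Word} {l : List Word} :
    Chain R A (v :: l) ↔ Just R A (v, l) ∧ Chain R A l := by
  constructor
  · intro h
    have h1 := h (v :: l) (by rw [List.tails_cons]; exact List.mem_cons_self)
    rcases h1 with h1 | ⟨p, hp, hj⟩
    · simp at h1
    · obtain ⟨rfl, rfl⟩ : v = p.1 ∧ l = p.2 := by
        constructor <;> [exact (List.cons.injEq _ _ _ _ ▸ hp).1;
          exact (List.cons.injEq _ _ _ _ ▸ hp).2]
      exact ⟨hj, fun t ht => h t (by rw [List.tails_cons]; exact List.mem_cons_of_mem _ ht)⟩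
  · rintro ⟨hj, hc⟩ t ht
    rw [List.tails_cons, List.mem_cons] at ht
    rcases ht with rfl | ht
    · exact Or.inr ⟨(v, l), rfl, hj⟩
    · exact hc t ht

theorem just_mono {v : Word} {l l' : List Word} (h : ∀ w ∈ l, w ∈ l') :
    Just R A (v, l) → Just R A (v, l') := by
  rintro (h1 | h1 | ⟨p, ⟨h1, h2⟩, h3⟩ | ⟨w, h1, h2⟩ | ⟨p, h1, h2⟩ | ⟨k, h1, h2⟩ | ⟨t, ht⟩)
  · exact Or.inl h1
  · exact Or.inr (Or.inl h1)
  · exact Or.inr (Or.inr (Or.inl ⟨p, ⟨h _ h1, h _ h2⟩, h3⟩))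
  · exact Or.inr (Or.inr (Or.inr (Or.inl ⟨w, h _ h1, h2⟩)))
  · exact Or.inr (Or.inr (Or.inr (Or.inr (Or.inl ⟨p, h _ h1, h2⟩))))
  · exact Or.inr (Or.inr (Or.inr (Or.inr (Or.inr (Or.inl ⟨k, h1, h _ h2⟩))))) 
  · exact Or.inr (Or.inr (Or.inr (Or.inr (Or.inr (Or.inr ⟨t,
      ht.imp (fun q => ⟨h _ q.1, q.2⟩) (fun q => ⟨h _ q.1, q.2⟩)⟩)))))

theorem chain_append {l₁ l₂ : List Word} (h₁ : Chain R A l₁) (h₂ : Chain R A l₂) :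
    Chain R A (l₁ ++ l₂) := by
  induction l₁ with
  | nil => exact h₂
  | cons a l ih =>
    rw [chain_cons] at h₁
    rw [List.cons_append, chain_cons]
    exact ⟨just_mono (fun w hw => List.mem_append_left _ hw) h₁.1, ih h₁.2⟩

theorem chain_sound {l : List Word} (h : Chain R A l) : ∀ v ∈ l, Der R A v := by
  induction l with
  | nil => intro v hv; simp at hv
  | cons a l ih =>
    rw [chain_cons] at h
    have hder : ∀ v ∈ l, Der R A v := ih h.2
    intro v hv
    rcases List.mem_cons.1 hv with rfl | hv
    · -- derive v from Just
      have hj := h.1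
      simp only [Just] at hj
      rcases hj with h1 | h1 | ⟨p, ⟨h1, h2⟩, h3⟩ | ⟨w, h1, h2⟩ | ⟨p, h1, h2⟩ | ⟨k, h1, h2⟩
        | ⟨t, ⟨h1, h2⟩ | ⟨h1, h2⟩⟩
      · exact Der.rel h1
      · rw [h1]; exact Der.one
      · rw [h3]; exact Der.mul (hder _ h1) (hder _ h2)
      · rw [h2]; exact Der.inv (hder _ h1)
      · rw [h2]; exact Der.conj p.1 (hder _ h1)
      · exact Der.pow h1 (hder _ h2)
      · rw [h2]; exact Der.red (hder _ h1) (Or.inl FreeGroup.Red.Step.not)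
      · rw [h2]; exact Der.red (hder _ h1) (Or.inr FreeGroup.Red.Step.not)
    · exact hder v hv

theorem der_chain {v : Word} (h : Der R A v) : ∃ l, Chain R A (v :: l) := by
  induction h with
  | rel h => exact ⟨[], chain_cons.2 ⟨Or.inl h, chain_nil⟩⟩
  | one => exact ⟨[], chain_cons.2 ⟨Or.inr (Or.inl rfl), chain_nil⟩⟩
  | mul _ _ ih₁ ih₂ =>
    rename_i w u _ _
    obtain ⟨l₁, h₁⟩ := ih₁
    obtain ⟨l₂, h₂⟩ := ih₂
    refine ⟨(w :: l₁) ++ (u :: l₂), chain_cons.2 ⟨?_, chain_append h₁ h₂⟩⟩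
    exact Or.inr (Or.inr (Or.inl ⟨(w, u),
      ⟨List.mem_append_left _ (List.mem_cons_self),
        List.mem_append_right _ (List.mem_cons_self)⟩, rfl⟩))
  | inv _ ih =>
    rename_i w _
    obtain ⟨l, hl⟩ := ih
    exact ⟨w :: l, chain_cons.2 ⟨Or.inr (Or.inr (Or.inr (Or.inl
      ⟨w, List.mem_cons_self, rfl⟩))), hl⟩⟩
  | conj u _ ih =>
    rename_i w _
    obtain ⟨l, hl⟩ := ih
    exact ⟨w :: l, chain_cons.2 ⟨Or.inr (Or.inr (Or.inr (Or.inr (Or.inl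
      ⟨(u, w), List.mem_cons_self, rfl⟩)))), hl⟩⟩
  | pow hk _ ih =>
    rename_i k w _
    obtain ⟨l, hl⟩ := ih
    exact ⟨wpow k w :: l, chain_cons.2 ⟨Or.inr (Or.inr (Or.inr (Or.inr (Or.inr (Or.inl
      ⟨k, hk, List.mem_cons_self⟩))))), hl⟩⟩
  | red _ hstep ih =>
    rename_i w u _
    obtain ⟨l, hl⟩ := ih
    rcases hstep with hstep | hstep
    · -- Step w u : w = insPair, u = cat
      cases hstep with
      | @not L₁ L₂ x b =>
        exact ⟨(L₁ ++ (x, b) :: (x, !b) :: L₂) :: l, chain_cons.2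
          ⟨Or.inr (Or.inr (Or.inr (Or.inr (Or.inr (Or.inr ⟨((L₁, L₂), x, b),
            Or.inl ⟨List.mem_cons_self, rfl⟩⟩))))), hl⟩⟩
    · cases hstep with
      | @not L₁ L₂ x b =>
        exact ⟨(L₁ ++ L₂) :: l, chain_cons.2
          ⟨Or.inr (Or.inr (Or.inr (Or.inr (Or.inr (Or.inr ⟨((L₁, L₂), x, b),
            Or.inr ⟨List.mem_cons_self, rfl⟩⟩))))), hl⟩⟩

theorem der_iff_chain (v : Word) : Der R A v ↔ ∃ l, Chain R A (v :: l) := by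
  constructor
  · exact der_chain
  · rintro ⟨l, hl⟩
    exact chain_sound hl v (List.mem_cons_self)

end RETools

namespace RETools

variable {R : Set Word} {A : Set ℕ}

theorem der_iff_of_eqvGen {w v : Word} (h : Relation.EqvGen FreeGroup.Red.Step w v) :
    Der R A w ↔ Der R A v := by
  induction h with
  | rel a b hab => exact ⟨fun d => Der.red d (Or.inl hab), fun d => Der.red d (Or.inr hab)⟩
  | refl a => exact Iff.rfl
  | symm a b _ ih => exact ih.symm
  | trans a b c _ _ ih₁ ih₂ => exact ih₁.trans ih₂

theorem der_of_mk_eq {w v : Word} (hw : Der R A w) (h : FreeGroup.mk w = FreeGroup.mk v) :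
    Der R A v :=
  (der_iff_of_eqvGen (Quot.eqvGen_exact h)).1 hw

variable (R A) in
/-- The subgroup of the free group consisting of images of derivable words. -/
def derSubgroup : Subgroup (FreeGroup ℕ) where
  carrier := FreeGroup.mk '' {w | Der R A w}
  one_mem' := ⟨[], Der.one, rfl⟩
  mul_mem' := by
    rintro a b ⟨w, hw, rfl⟩ ⟨v, hv, rfl⟩
    exact ⟨w ++ v, Der.mul hw hv, (FreeGroup.mul_mk).symm⟩
  inv_mem' := by
    rintro a ⟨w, hw, rfl⟩
    exact ⟨FreeGroup.invRev w, Der.inv hw, (FreeGroup.inv_mk).symm⟩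

instance : (derSubgroup R A).Normal := by
  constructor
  rintro a ⟨w, hw, rfl⟩ g
  refine ⟨g.toWord ++ w ++ FreeGroup.invRev g.toWord, Der.conj g.toWord hw, ?_⟩
  rw [← FreeGroup.mul_mk, ← FreeGroup.mul_mk, ← FreeGroup.inv_mk, FreeGroup.mk_toWord]

end RETools

theorem universal_quotient_recursively_presented
    (R : Set (List (ℕ × Bool))) (hR : REPredOld (· ∈ R))
    (A : Set ℕ) (hA : REPredOld (· ∈ A)) :
    ∃ R' : Set (List (ℕ × Bool)), REPredOld (· ∈ R') ∧ R ⊆ R' ∧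
      Subgroup.normalClosure (FreeGroup.mk '' R') =
        ((QuotientGroup.mk' (torOmega A (PresentedGroup (FreeGroup.mk '' R)))).comp
          (PresentedGroup.mk (FreeGroup.mk '' R))).ker ∧
      Nonempty
        ((PresentedGroup (FreeGroup.mk '' R) ⧸
            torOmega A (PresentedGroup (FreeGroup.mk '' R))) ≃*
          PresentedGroup (FreeGroup.mk '' R')) := by
  classical
  open RETools in
  refine ⟨{w | Der R A w}, ?_, fun w hw => Der.rel hw, ?_⟩
  · exact rePred_der hR hA der_iff_chain
  set G := PresentedGroup (FreeGroup.mk '' R) with hG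
  set π : FreeGroup ℕ →* G := PresentedGroup.mk (FreeGroup.mk '' R) with hπ
  set N := torOmega A G with hN
  set φ : FreeGroup ℕ →* G ⧸ N := (QuotientGroup.mk' N).comp π with hφ
  have hkerπ : π.ker = Subgroup.normalClosure (FreeGroup.mk '' R) := by
    ext x
    exact QuotientGroup.eq_one_iff x
  have hmemker : ∀ x : FreeGroup ℕ, x ∈ φ.ker ↔ π x ∈ N := by
    intro x
    rw [MonoidHom.mem_ker, hφ, MonoidHom.comp_apply]
    exact QuotientGroup.eq_one_iff (π x)
  set K := RETools.derSubgroup R A with hK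
  have hRK : FreeGroup.mk '' R ⊆ (K : Set (FreeGroup ℕ)) := by
    rintro _ ⟨w, hw, rfl⟩
    exact ⟨w, RETools.Der.rel hw, rfl⟩
  have hkerπK : π.ker ≤ K := by
    rw [hkerπ]
    exact Subgroup.normalClosure_le_normal hRK
  -- K ≤ ker φ
  have hKker : ∀ w : RETools.Word, Der R A w → FreeGroup.mk w ∈ φ.ker := by
    intro w hw
    induction hw with
    | @rel w' h =>
      have h1 : FreeGroup.mk w' ∈ π.ker := by
        rw [hkerπ]
        exact Subgroup.subset_normalClosure ⟨_, h, rfl⟩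
      rw [MonoidHom.mem_ker, hφ, MonoidHom.comp_apply, MonoidHom.mem_ker.1 h1, map_one]
    | one =>
      rw [← FreeGroup.one_eq_mk]
      exact one_mem _
    | mul _ _ ih₁ ih₂ =>
      rw [← FreeGroup.mul_mk]
      exact mul_mem ih₁ ih₂
    | inv _ ih =>
      rw [← FreeGroup.inv_mk]
      exact inv_mem ih
    | conj u _ ih =>
      rw [← FreeGroup.mul_mk, ← FreeGroup.mul_mk, ← FreeGroup.inv_mk]
      exact (MonoidHom.normal_ker φ).conj_mem _ ih (FreeGroup.mk u)
    | @pow k v hk _ ih =>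
      rw [RETools.mk_wpow] at ih
      have h2 : (π (FreeGroup.mk v)) ^ k ∈ N := by
        rw [← map_pow]
        exact (hmemker _).1 ih
      obtain ⟨n, hn⟩ := (mem_torOmega_iff _).1 h2
      have h3 : π (FreeGroup.mk v) ∈ torX A G (n + 1) :=
        Subgroup.subset_normalClosure ⟨k, hk, hn⟩
      exact (hmemker _).2 ((mem_torOmega_iff _).2 ⟨n + 1, h3⟩)
    | @red w' v' _ hstep ih =>
      have heq : FreeGroup.mk w' = FreeGroup.mk v' := by
        rcases hstep with hstep | hstep
        · exact Quot.sound hstep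
        · exact (Quot.sound hstep).symm
      rw [← heq]
      exact ih
  -- ker φ ≤ K
  have htorX : ∀ n : ℕ, ∀ x : FreeGroup ℕ, π x ∈ torX A G n → x ∈ K := by
    intro n
    induction n with
    | zero =>
      intro x hx
      rw [torX, Subgroup.mem_bot] at hx
      exact hkerπK (MonoidHom.mem_ker.2 hx)
    | succ n ih =>
      haveI : (Subgroup.map π K).Normal :=
        Subgroup.Normal.map inferInstance π (PresentedGroup.mk_surjective _)
      have hsub : torX A G (n + 1) ≤ Subgroup.map π K := by
        apply Subgroup.normalClosure_le_normal
        rintro g ⟨k, hk, hgk⟩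
        obtain ⟨x, rfl⟩ := PresentedGroup.mk_surjective _ g
        have hx : FreeGroup.mk x.toWord = x := FreeGroup.mk_toWord
        have h2 : π (FreeGroup.mk (RETools.wpow k x.toWord)) ∈ torX A G n := by
          rw [RETools.mk_wpow, hx, map_pow]
          exact hgk
        obtain ⟨v, hv, hveq⟩ := ih _ h2
        have h4 : Der R A (RETools.wpow k x.toWord) := RETools.der_of_mk_eq hv hveq
        have h5 : Der R A x.toWord := RETools.Der.pow hk h4
        exact ⟨x, ⟨x.toWord, h5, hx⟩, rfl⟩
      intro x hx
      obtain ⟨y, hy, hyx⟩ := hsub hx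
      have h6 : y⁻¹ * x ∈ π.ker := by
        rw [MonoidHom.mem_ker, map_mul, map_inv, hyx]
        group
      have h7 : x = y * (y⁻¹ * x) := by group
      rw [h7]
      exact mul_mem hy (hkerπK h6)
  have hkerK : φ.ker ≤ K := by
    intro x hx
    obtain ⟨n, hn⟩ := (mem_torOmega_iff _).1 ((hmemker x).1 hx)
    exact htorX n x hn
  have hKeq : Subgroup.normalClosure (FreeGroup.mk '' {w | Der R A w}) = φ.ker := by
    have hcar : FreeGroup.mk '' {w | Der R A w} = (K : Set (FreeGroup ℕ)) := rfl
    rw [hcar, Subgroup.normalClosure_eq_self]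
    refine le_antisymm ?_ hkerK
    rintro _ ⟨w, hw, rfl⟩
    exact hKker w hw
  refine ⟨hKeq, ⟨?_⟩⟩
  have hφs : Function.Surjective φ :=
    (QuotientGroup.mk'_surjective N).comp (PresentedGroup.mk_surjective _)
  exact ((QuotientGroup.quotientMulEquivOfEq hKeq).trans
    (QuotientGroup.quotientKerEquivOfSurjective φ hφs)).symm
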